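/- Let α = (α₁, α₂) ∈ ℝ² with α₂ ≠ 0, and suppose there is a constant c_α > 0 such that ‖∇f‖_{L²(𝕋²)}·‖⟨∇f,α⟩‖_{L²(𝕋²)} ≥ c_α·‖f‖²_{L²(𝕋²)} for all mean-zero f ∈ H¹(𝕋²). Then c_α ≤ |α|/√5, where |α| = √(α₁² + α₂²). -/

import Mathlib

open Real

/- We model a mean-zero function `f ∈ H¹(𝕋²)` on the flat torus `𝕋² = ℝ²/(2πℤ)²`
by its Fourier coefficients `a : ℤ × ℤ → ℂ`, `f = Σ aₖ e^{ik·x}`, `a₀ = 0`.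
By Parseval, `‖f‖²_{L²} = (2π)² Σ |aₖ|²`, `‖∇f‖²_{L²} = (2π)² Σ |k|²|aₖ|²` and
`‖⟨∇f,α⟩‖²_{L²} = (2π)² Σ ⟨k,α⟩²|aₖ|²`.  All inequalities below are homogeneous
in the number of `L²`-norm factors, so the constant `(2π)²` is harmlessly dropped. -/

/-- `‖f‖²_{L²(𝕋²)}` (modulo the factor `(2π)²`). -/
noncomputable def normSq (a : ℤ × ℤ → ℂ) : ℝ := ∑' k : ℤ × ℤ, ‖a k‖ ^ 2

/-- `‖∇f‖²_{L²(𝕋²)}` (modulo the factor `(2π)²`). -/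
noncomputable def gradSq (a : ℤ × ℤ → ℂ) : ℝ :=
  ∑' k : ℤ × ℤ, (((k.1 : ℝ)) ^ 2 + ((k.2 : ℝ)) ^ 2) * ‖a k‖ ^ 2

/-- `‖⟨∇f, α⟩‖²_{L²(𝕋²)}` (modulo the factor `(2π)²`). -/
noncomputable def dirSq (α : ℝ × ℝ) (a : ℤ × ℤ → ℂ) : ℝ :=
  ∑' k : ℤ × ℤ, (α.1 * k.1 + α.2 * k.2) ^ 2 * ‖a k‖ ^ 2

/-- `f ∈ H¹(𝕋²)`. -/
def IsH1 (a : ℤ × ℤ → ℂ) : Prop :=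
  Summable (fun k : ℤ × ℤ => ‖a k‖ ^ 2) ∧
  Summable (fun k : ℤ × ℤ => (((k.1 : ℝ)) ^ 2 + ((k.2 : ℝ)) ^ 2) * ‖a k‖ ^ 2)

/-- single Fourier mode test function -/
noncomputable def sm (k₀ : ℤ × ℤ) : ℤ × ℤ → ℂ := fun k => if k = k₀ then 1 else 0

lemma sm_summable (k₀ : ℤ × ℤ) (g : ℤ × ℤ → ℝ) :
    Summable (fun k : ℤ × ℤ => g k * ‖sm k₀ k‖ ^ 2) := by
  apply summable_of_ne_finset_zero (s := {k₀})
  intro b hb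
  simp only [Finset.mem_singleton] at hb
  simp [sm, hb]

lemma sm_tsum (k₀ : ℤ × ℤ) (g : ℤ × ℤ → ℝ) :
    (∑' k : ℤ × ℤ, g k * ‖sm k₀ k‖ ^ 2) = g k₀ := by
  rw [tsum_eq_single k₀]
  · simp [sm]
  · intro b hb; simp [sm, hb]

lemma single_mode (α₁ α₂ cα : ℝ)
    (h : ∀ a : ℤ × ℤ → ℂ, IsH1 a → a 0 = 0 →
      Real.sqrt (gradSq a) * Real.sqrt (dirSq (α₁, α₂) a) ≥ cα * normSq a)
    (k₁ k₂ : ℤ) (hk : (k₁, k₂) ≠ (0 : ℤ × ℤ)) :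
    cα ≤ Real.sqrt ((k₁ : ℝ) ^ 2 + (k₂ : ℝ) ^ 2) * |α₁ * k₁ + α₂ * k₂| := by
  have h1 : IsH1 (sm (k₁, k₂)) := by
    constructor
    · simpa using sm_summable (k₁, k₂) (fun _ => 1)
    · exact sm_summable (k₁, k₂) _
  have h0 : sm (k₁, k₂) 0 = 0 := by simp [sm, hk.symm, (Ne.symm hk)]
  have := h (sm (k₁, k₂)) h1 h0
  have hn : normSq (sm (k₁, k₂)) = 1 := by
    have := sm_tsum (k₁, k₂) (fun _ => 1)
    simpa [normSq, sm] using sm_tsum (k₁, k₂) (fun _ => 1)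
  have hg : gradSq (sm (k₁, k₂)) = (k₁ : ℝ) ^ 2 + (k₂ : ℝ) ^ 2 :=
    sm_tsum (k₁, k₂) (fun k => ((k.1 : ℝ)) ^ 2 + ((k.2 : ℝ)) ^ 2)
  have hd : dirSq (α₁, α₂) (sm (k₁, k₂)) = (α₁ * k₁ + α₂ * k₂) ^ 2 :=
    sm_tsum (k₁, k₂) (fun k => (α₁ * k.1 + α₂ * k.2) ^ 2)
  rw [hn, hg, hd, Real.sqrt_sq_eq_abs, mul_one] at this
  exact this

noncomputable def cfT (θ : ℝ) : ℕ → ℝ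
  | 0 => θ
  | n + 1 => (Int.fract (cfT θ n))⁻¹

noncomputable def cfS (θ : ℝ) : ℕ → (ℤ × ℤ) × (ℤ × ℤ)
  | 0 => ((1, 0), (⌊θ⌋, 1))
  | n + 1 =>
    ((cfS θ n).2,
      (⌊cfT θ (n + 1)⌋ * (cfS θ n).2.1 + (cfS θ n).1.1,
       ⌊cfT θ (n + 1)⌋ * (cfS θ n).2.2 + (cfS θ n).1.2))

noncomputable def cfP (θ : ℝ) (n : ℕ) : ℤ := ((cfS θ n).1).1
noncomputable def cfQ (θ : ℝ) (n : ℕ) : ℤ := ((cfS θ n).1).2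

lemma cfP_succ (θ : ℝ) (n : ℕ) : cfP θ (n + 1) = (cfS θ n).2.1 := rfl
lemma cfQ_succ (θ : ℝ) (n : ℕ) : cfQ θ (n + 1) = (cfS θ n).2.2 := rfl
lemma cfP_zero (θ : ℝ) : cfP θ 0 = 1 := rfl
lemma cfQ_zero (θ : ℝ) : cfQ θ 0 = 0 := rfl
lemma cfP_one (θ : ℝ) : cfP θ 1 = ⌊θ⌋ := rfl
lemma cfQ_one (θ : ℝ) : cfQ θ 1 = 1 := rfl
lemma cfP_two (θ : ℝ) (n : ℕ) :
    cfP θ (n + 2) = ⌊cfT θ (n + 1)⌋ * cfP θ (n + 1) + cfP θ n := rfl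
lemma cfQ_two (θ : ℝ) (n : ℕ) :
    cfQ θ (n + 2) = ⌊cfT θ (n + 1)⌋ * cfQ θ (n + 1) + cfQ θ n := rfl

variable {θ : ℝ}

lemma cfT_irr (hθ : Irrational θ) : ∀ n, Irrational (cfT θ n) := by
  intro n
  induction n with
  | zero => exact hθ
  | succ n ih =>
    show Irrational (Int.fract (cfT θ n))⁻¹
    have : Irrational (Int.fract (cfT θ n)) := by
      rw [Int.fract]
      exact ih.sub_intCast _
    exact this.inv

lemma cfT_fract_pos (hθ : Irrational θ) (n : ℕ) : 0 < Int.fract (cfT θ n) := by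
  rcases lt_or_eq_of_le (Int.fract_nonneg (cfT θ n)) with h | h
  · exact h
  · exfalso
    have : Irrational (Int.fract (cfT θ n)) := by
      rw [Int.fract]; exact (cfT_irr hθ n).sub_intCast _
    rw [← h] at this
    exact not_irrational_zero this

lemma cfT_one_lt (hθ : Irrational θ) (n : ℕ) : 1 < cfT θ (n + 1) := by
  show 1 < (Int.fract (cfT θ n))⁻¹
  rw [lt_inv_comm₀ one_pos (cfT_fract_pos hθ n)]
  simpa using Int.fract_lt_one (cfT θ n)

lemma cfT_floor_ge (hθ : Irrational θ) (n : ℕ) : 1 ≤ ⌊cfT θ (n + 1)⌋ := by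
  have := cfT_one_lt hθ n
  exact Int.le_floor.2 (by exact_mod_cast this.le)

lemma cfT_rec (hθ : Irrational θ) (n : ℕ) :
    cfT θ n = ⌊cfT θ n⌋ + (cfT θ (n + 1))⁻¹ := by
  show cfT θ n = ⌊cfT θ n⌋ + ((Int.fract (cfT θ n))⁻¹)⁻¹
  rw [inv_inv, Int.fract]
  ring

lemma cfDet (θ : ℝ) : ∀ n : ℕ, cfP θ (n + 1) * cfQ θ n - cfP θ n * cfQ θ (n + 1) = (-1) ^ (n + 1) := by
  intro n
  induction n with
  | zero => simp [cfP_zero, cfQ_zero, cfP_one, cfQ_one]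
  | succ n ih =>
    rw [cfP_two, cfQ_two, pow_succ]
    nlinarith [ih]

lemma cfQ_nonneg (hθ : Irrational θ) : ∀ n, 0 ≤ cfQ θ n ∧ 1 ≤ cfQ θ (n + 1) := by
  intro n
  induction n with
  | zero => simp [cfQ_zero, cfQ_one]
  | succ n ih =>
    refine ⟨le_trans zero_le_one ih.2, ?_⟩
    rw [cfQ_two]
    nlinarith [cfT_floor_ge hθ n, ih.1, ih.2]

lemma cfQ_pos (hθ : Irrational θ) (n : ℕ) : 1 ≤ cfQ θ (n + 1) := (cfQ_nonneg hθ n).2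

lemma cfQ_fib (hθ : Irrational θ) (n : ℕ) :
    cfQ θ n + cfQ θ (n + 1) ≤ cfQ θ (n + 2) := by
  rw [cfQ_two]
  nlinarith [cfT_floor_ge hθ n, (cfQ_nonneg hθ n).2]

lemma cfQ_large (hθ : Irrational θ) : ∀ n : ℕ, (n : ℤ) + 1 ≤ cfQ θ (n + 2) := by
  intro n
  induction n with
  | zero => simpa using le_trans (by simp [cfQ_zero, cfQ_one]) (cfQ_fib hθ 0)
  | succ n ih =>
    have h0 : cfQ θ (n + 1 + 2) = cfQ θ (n + 3) := rfl
    have h2 : cfQ θ (n + 1 + 1) = cfQ θ (n + 2) := rfl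
    have h3 := cfQ_fib hθ (n + 1)
    rw [h0, h2] at h3
    have h1 := cfQ_pos hθ n
    rw [h0]
    push_cast
    omega

lemma cfMain (hθ : Irrational θ) : ∀ n : ℕ,
    θ * (cfT θ (n + 1) * cfQ θ (n + 1) + cfQ θ n) = cfT θ (n + 1) * cfP θ (n + 1) + cfP θ n := by
  intro n
  induction n with
  | zero =>
    have h0 : cfT θ 0 = θ := rfl
    have := cfT_rec hθ 0
    rw [h0] at this
    have ht : cfT θ 1 ≠ 0 := ne_of_gt (lt_trans one_pos (cfT_one_lt hθ 0))
    have hinv : cfT θ 1 * (cfT θ 1)⁻¹ = 1 := mul_inv_cancel₀ ht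
    have this' : θ = (⌊θ⌋ : ℝ) + (cfT θ 1)⁻¹ := this
    show θ * (cfT θ 1 * (cfQ θ 1 : ℝ) + (cfQ θ 0 : ℝ)) = cfT θ 1 * (cfP θ 1 : ℝ) + (cfP θ 0 : ℝ)
    rw [cfP_zero, cfQ_zero, cfP_one, cfQ_one]
    push_cast
    linear_combination cfT θ 1 * this' + hinv
  | succ n ih =>
    have hrec := cfT_rec hθ (n + 1)
    have ht : cfT θ (n + 1 + 1) ≠ 0 := ne_of_gt (lt_trans one_pos (cfT_one_lt hθ (n + 1)))
    have hinv : cfT θ (n + 1 + 1) * (cfT θ (n + 1 + 1))⁻¹ = 1 := mul_inv_cancel₀ ht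
    have hrec' : cfT θ (n + 1 + 1) * cfT θ (n + 1) =
        cfT θ (n + 1 + 1) * ⌊cfT θ (n + 1)⌋ + 1 := by
      linear_combination cfT θ (n + 1 + 1) * hrec + hinv
    rw [cfP_two, cfQ_two]
    push_cast
    linear_combination cfT θ (n + 1 + 1) * ih - (θ * (cfQ θ (n + 1) : ℝ) - (cfP θ (n + 1) : ℝ)) * hrec'

/-- signed error `(-1)^(n+1) (θ Qₙ - Pₙ)` -/
noncomputable def cfE (θ : ℝ) (n : ℕ) : ℝ :=
  (-1) ^ (n + 1) * (θ * cfQ θ n - cfP θ n)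

lemma cfE_zero (θ : ℝ) : cfE θ 0 = 1 := by
  simp [cfE, cfQ_zero, cfP_zero]

lemma cfE_rec (hθ : Irrational θ) (n : ℕ) :
    cfE θ (n + 1) * cfT θ (n + 1) = cfE θ n := by
  have h := cfMain hθ n
  simp only [cfE]
  push_cast
  linear_combination ((-1 : ℝ)) ^ (n + 1 + 1) * h

lemma cfE_pos (hθ : Irrational θ) : ∀ n, 0 < cfE θ n := by
  intro n
  induction n with
  | zero => simp [cfE_zero]
  | succ n ih =>
    have ht : 0 < cfT θ (n + 1) := lt_trans one_pos (cfT_one_lt hθ n)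
    have := cfE_rec hθ n
    nlinarith

lemma cfE_lt (hθ : Irrational θ) (n : ℕ) : cfE θ (n + 1) < cfE θ n := by
  have ht := cfT_one_lt hθ n
  have hE := cfE_pos hθ (n + 1)
  have := cfE_rec hθ n
  nlinarith

/-- the fundamental identity `Eₙ Qₙ₊₁ + Eₙ₊₁ Qₙ = 1`. -/
lemma cfE_identity (hθ : Irrational θ) (n : ℕ) :
    cfE θ n * cfQ θ (n + 1) + cfE θ (n + 1) * cfQ θ n = 1 := by
  have hdet := cfDet θ n
  have hdet' : (cfP θ (n + 1) : ℝ) * cfQ θ n - cfP θ n * cfQ θ (n + 1) = (-1) ^ (n + 1) := by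
    exact_mod_cast congrArg (fun z : ℤ => (z : ℝ)) hdet
  have hsq : ((-1 : ℝ)) ^ (n + 1) * ((-1 : ℝ)) ^ (n + 1) = 1 := by
    rw [← pow_add]
    exact (neg_one_pow_eq_one_iff_even (by norm_num)).2 ⟨n + 1, by ring⟩
  simp only [cfE]
  linear_combination ((-1 : ℝ)) ^ (n + 1) * hdet' + hsq

lemma cfQ_mono (hθ : Irrational θ) (n : ℕ) : cfQ θ (n + 1) ≤ cfQ θ (n + 2) := by
  have := cfQ_fib hθ n
  have := (cfQ_nonneg hθ n).1
  omega

set_option maxHeartbeats 1000000 in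
lemma hurwitz_arith (s q1 q2 q3 e1 e2 e3 : ℝ) (hs : s ^ 2 = 5) (hs_pos : 0 < s)
    (hq1 : 1 ≤ q1) (hq2 : 1 ≤ q2) (hq3 : 1 ≤ q3) (hfib : q1 + q2 ≤ q3)
    (hid1 : e1 * q2 + e2 * q1 = 1) (hid2 : e2 * q3 + e3 * q2 = 1)
    (h1 : 1 ≤ e1 * q1 * s) (h2 : 1 ≤ e2 * q2 * s) (h3 : 1 ≤ e3 * q3 * s) :
    2 * q3 = (s + 1) * q2 := by
  have hq1p : (0 : ℝ) < q1 := lt_of_lt_of_le one_pos hq1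
  have hq2p : (0 : ℝ) < q2 := lt_of_lt_of_le one_pos hq2
  have k1 : q2 ^ 2 * 1 ≤ q2 ^ 2 * (e1 * q1 * s) := mul_le_mul_of_nonneg_left h1 (sq_nonneg q2)
  have k2 : q1 ^ 2 * 1 ≤ q1 ^ 2 * (e2 * q2 * s) := mul_le_mul_of_nonneg_left h2 (sq_nonneg q1)
  have k3 : (e1 * q2 + e2 * q1) * (s * q1 * q2) = 1 * (s * q1 * q2) := by rw [hid1]
  have hA : q1 ^ 2 + q2 ^ 2 ≤ s * (q1 * q2) := by nlinarith [k1, k2, k3]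
  have k1' : q3 ^ 2 * 1 ≤ q3 ^ 2 * (e2 * q2 * s) := mul_le_mul_of_nonneg_left h2 (sq_nonneg q3)
  have k2' : q2 ^ 2 * 1 ≤ q2 ^ 2 * (e3 * q3 * s) := mul_le_mul_of_nonneg_left h3 (sq_nonneg q2)
  have k3' : (e2 * q3 + e3 * q2) * (s * q2 * q3) = 1 * (s * q2 * q3) := by rw [hid2]
  have hB : q2 ^ 2 + q3 ^ 2 ≤ s * (q2 * q3) := by nlinarith [k1', k2', k3']
  have hx : 2 * q2 ≤ (s + 1) * q1 := by
    by_contra hcx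
    push_neg at hcx
    have ha : 0 < 2 * q2 - (s + 1) * q1 := by linarith
    have hb' : 0 < 2 * q2 - (s - 1) * q1 := by nlinarith [hq1p]
    nlinarith [mul_pos ha hb', hA, hs]
  have hy : 2 * q3 ≤ (s + 1) * q2 := by
    by_contra hcy
    push_neg at hcy
    have ha : 0 < 2 * q3 - (s + 1) * q2 := by linarith
    have hb' : 0 < 2 * q3 - (s - 1) * q2 := by nlinarith [hq2p]
    nlinarith [mul_pos ha hb', hB, hs]
  have h5 : (s + 1) * q3 ≥ (3 + s) * q2 := by
    have := mul_le_mul_of_nonneg_left hfib (by positivity : (0:ℝ) ≤ s + 1)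
    nlinarith [hx]
  have hz : (s + 1) * q2 ≤ 2 * q3 := by
    by_contra hcz
    push_neg at hcz
    have := mul_lt_mul_of_pos_left hcz (by positivity : (0:ℝ) < s + 1)
    nlinarith [h5, hs]
  exact le_antisymm hy hz

/-- Hurwitz: infinitely many `n` with `Qₙ² |θ - Pₙ/Qₙ| = Eₙ Qₙ < 1/√5`. -/
lemma hurwitz (hθ : Irrational θ) (m : ℕ) :
    ∃ n, m + 1 ≤ n ∧ cfE θ n * (cfQ θ n : ℝ) < 1 / Real.sqrt 5 := by
  by_contra hcon
  push_neg at hcon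
  have hs : Real.sqrt 5 ^ 2 = 5 := Real.sq_sqrt (by norm_num)
  have hs_pos : 0 < Real.sqrt 5 := Real.sqrt_pos.2 (by norm_num)
  have irr5 : Irrational (Real.sqrt 5) := by
    have : Irrational (Real.sqrt (5 : ℕ)) := (by norm_num : Nat.Prime 5).irrational_sqrt
    simpa using this
  have hq1 : (1 : ℝ) ≤ (cfQ θ (m + 1) : ℝ) := by exact_mod_cast cfQ_pos hθ m
  have hq2 : (1 : ℝ) ≤ (cfQ θ (m + 2) : ℝ) := by exact_mod_cast cfQ_pos hθ (m + 1)
  have hq3 : (1 : ℝ) ≤ (cfQ θ (m + 3) : ℝ) := by exact_mod_cast cfQ_pos hθ (m + 2)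
  have hfib : (cfQ θ (m + 1) : ℝ) + (cfQ θ (m + 2) : ℝ) ≤ (cfQ θ (m + 3) : ℝ) := by
    exact_mod_cast cfQ_fib hθ (m + 1)
  have hid1 : cfE θ (m + 1) * (cfQ θ (m + 2) : ℝ)
      + cfE θ (m + 2) * (cfQ θ (m + 1) : ℝ) = 1 := cfE_identity hθ (m + 1)
  have hid2 : cfE θ (m + 2) * (cfQ θ (m + 3) : ℝ)
      + cfE θ (m + 3) * (cfQ θ (m + 2) : ℝ) = 1 := cfE_identity hθ (m + 2)
  have hb : ∀ i : ℕ, m + 1 ≤ i → 1 ≤ cfE θ i * (cfQ θ i : ℝ) * Real.sqrt 5 := by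
    intro i hi
    have := hcon i hi
    rw [div_le_iff₀ hs_pos] at this
    linarith
  have heq := hurwitz_arith (Real.sqrt 5) (cfQ θ (m + 1) : ℝ) (cfQ θ (m + 2) : ℝ)
    (cfQ θ (m + 3) : ℝ) (cfE θ (m + 1)) (cfE θ (m + 2)) (cfE θ (m + 3))
    hs hs_pos hq1 hq2 hq3 hfib hid1 hid2
    (hb (m + 1) le_rfl) (hb (m + 2) (by omega)) (hb (m + 3) (by omega))
  have hq2p : (0 : ℝ) < (cfQ θ (m + 2) : ℝ) := lt_of_lt_of_le one_pos hq2
  have hrat : Real.sqrt 5 =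
      (((2 * cfQ θ (m + 3) - cfQ θ (m + 2) : ℤ) : ℚ) / ((cfQ θ (m + 2) : ℤ) : ℚ) : ℚ) := by
    have hq2ne : (cfQ θ (m + 2) : ℝ) ≠ 0 := ne_of_gt hq2p
    push_cast
    field_simp
    linarith [heq]
  exact Rat.not_irrational _ (hrat ▸ irr5)


lemma cfE_abs {θ : ℝ} (hθ : Irrational θ) (n : ℕ) :
    |θ * (cfQ θ n : ℝ) - (cfP θ n : ℝ)| = cfE θ n := by
  rw [← abs_of_pos (cfE_pos hθ n)]
  rw [cfE, abs_mul, abs_pow, abs_neg, abs_one, one_pow, one_mul]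

lemma sqrt_sq_add_one_le (x t : ℝ) :
    Real.sqrt (x ^ 2 + 1) ≤ Real.sqrt (t ^ 2 + 1) + |x - t| := by
  have h1 : Real.sqrt (t ^ 2 + 1) ^ 2 = t ^ 2 + 1 := Real.sq_sqrt (by positivity)
  have ht : |t| ≤ Real.sqrt (t ^ 2 + 1) := by
    rw [← Real.sqrt_sq_eq_abs]
    exact Real.sqrt_le_sqrt (by linarith)
  have e1 : t * (x - t) ≤ |t| * |x - t| := by
    calc t * (x - t) ≤ |t * (x - t)| := le_abs_self _
    _ = |t| * |x - t| := abs_mul _ _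
  have h2 : x ^ 2 + 1 ≤ (Real.sqrt (t ^ 2 + 1) + |x - t|) ^ 2 := by
    nlinarith [sq_abs (x - t), abs_nonneg (x - t), abs_nonneg t,
      mul_le_mul_of_nonneg_right ht (abs_nonneg (x - t))]
  calc Real.sqrt (x ^ 2 + 1)
      ≤ Real.sqrt ((Real.sqrt (t ^ 2 + 1) + |x - t|) ^ 2) := Real.sqrt_le_sqrt h2
    _ = _ := Real.sqrt_sq (by positivity)


lemma final_arith (α₁ α₂ cα θ ε QR PR E : ℝ) (hα₂ : α₂ ≠ 0) (hθ : θ = α₁ / α₂)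
    (hε : 0 < ε) (hQ1 : 1 ≤ QR) (hQN : |α₂| ≤ ε * QR) (hEp : 0 < E)
    (hEQ : E * QR < 1 / Real.sqrt 5) (habs : |θ * QR - PR| = E)
    (hmode0 : cα ≤ Real.sqrt (QR ^ 2 + (-PR) ^ 2) * |α₁ * QR + α₂ * -PR|) :
    cα ≤ Real.sqrt (α₁ ^ 2 + α₂ ^ 2) / Real.sqrt 5 + ε := by
  have hmode : cα ≤ Real.sqrt (QR ^ 2 + PR ^ 2) * (|α₂| * E) := by
    have e1 : α₁ * QR + α₂ * -PR = α₂ * (θ * QR - PR) := by rw [hθ]; field_simp; ring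
    have e2 : QR ^ 2 + (-PR) ^ 2 = QR ^ 2 + PR ^ 2 := by ring
    rw [e1, e2, abs_mul, habs] at hmode0
    exact hmode0
  have hs : Real.sqrt 5 ^ 2 = 5 := Real.sq_sqrt (by norm_num)
  have hs_pos : 0 < Real.sqrt 5 := Real.sqrt_pos.2 (by norm_num)
  have hs1 : 1 ≤ Real.sqrt 5 := by nlinarith [hs, hs_pos]
  have hQp : (0 : ℝ) < QR := lt_of_lt_of_le one_pos hQ1
  have hE1 : E ≤ 1 / QR := by
    rw [le_div_iff₀ hQp]
    have h51 : 1 / Real.sqrt 5 ≤ 1 := by rw [div_le_one hs_pos]; exact hs1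
    linarith
  have hx3 : |PR / QR - θ| = E / QR := by
    rw [show PR / QR - θ = (PR - θ * QR) / QR by field_simp, abs_div, abs_of_pos hQp,
      abs_sub_comm, habs]
  have hsplit : Real.sqrt (QR ^ 2 + PR ^ 2) ≤ Real.sqrt (θ ^ 2 + 1) * QR + E := by
    have hx1 : Real.sqrt (QR ^ 2 + PR ^ 2) = QR * Real.sqrt ((PR / QR) ^ 2 + 1) := by
      rw [show QR ^ 2 + PR ^ 2 = QR ^ 2 * ((PR / QR) ^ 2 + 1) by field_simp; ring,
        Real.sqrt_mul (sq_nonneg QR), Real.sqrt_sq hQp.le]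
    rw [hx1]
    calc QR * Real.sqrt ((PR / QR) ^ 2 + 1)
        ≤ QR * (Real.sqrt (θ ^ 2 + 1) + |PR / QR - θ|) :=
          mul_le_mul_of_nonneg_left (sqrt_sq_add_one_le _ _) hQp.le
      _ = QR * (Real.sqrt (θ ^ 2 + 1) + E / QR) := by rw [hx3]
      _ = Real.sqrt (θ ^ 2 + 1) * QR + E := by field_simp
  have haux1 : |α₂| * Real.sqrt (θ ^ 2 + 1) = Real.sqrt (α₁ ^ 2 + α₂ ^ 2) := by
    rw [← Real.sqrt_sq_eq_abs, ← Real.sqrt_mul (sq_nonneg α₂)]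
    congr 1
    rw [hθ]
    field_simp
  have hmode'' : cα ≤ (Real.sqrt (θ ^ 2 + 1) * QR + E) * (|α₂| * E) :=
    le_trans hmode (mul_le_mul_of_nonneg_right hsplit (by positivity))
  have b1 : |α₂| * Real.sqrt (θ ^ 2 + 1) * (E * QR) ≤
      Real.sqrt (α₁ ^ 2 + α₂ ^ 2) * (1 / Real.sqrt 5) := by
    rw [haux1]
    exact mul_le_mul_of_nonneg_left hEQ.le (Real.sqrt_nonneg _)
  have b2 : |α₂| * E ^ 2 ≤ ε := by
    have h01 : 1 / QR ≤ 1 := by rw [div_le_one hQp]; exact hQ1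
    have h0p : 0 < 1 / QR := one_div_pos.2 hQp
    have hEsq : E ^ 2 ≤ 1 / QR := by nlinarith [hE1, hEp, h01, h0p]
    calc |α₂| * E ^ 2 ≤ |α₂| * (1 / QR) := mul_le_mul_of_nonneg_left hEsq (abs_nonneg _)
      _ = |α₂| / QR := by ring
      _ ≤ ε := by rw [div_le_iff₀ hQp]; exact hQN
  calc cα ≤ (Real.sqrt (θ ^ 2 + 1) * QR + E) * (|α₂| * E) := hmode''
    _ = |α₂| * Real.sqrt (θ ^ 2 + 1) * (E * QR) + |α₂| * E ^ 2 := by ring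
    _ ≤ Real.sqrt (α₁ ^ 2 + α₂ ^ 2) * (1 / Real.sqrt 5) + ε := add_le_add b1 b2
    _ = Real.sqrt (α₁ ^ 2 + α₂ ^ 2) / Real.sqrt 5 + ε := by ring

/-- If `α₂ ≠ 0` and the directional Poincaré inequality
`‖∇f‖ ⬝ ‖⟨∇f,α⟩‖ ≥ c_α ‖f‖²` holds for all mean-zero `f ∈ H¹(𝕋²)`
with `c_α > 0`, then `c_α ≤ |α|/√5`. -/
theorem stmt_12 (α₁ α₂ cα : ℝ) (hα₂ : α₂ ≠ 0) (hc : 0 < cα)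
    (h : ∀ a : ℤ × ℤ → ℂ, IsH1 a → a 0 = 0 →
      Real.sqrt (gradSq a) * Real.sqrt (dirSq (α₁, α₂) a) ≥ cα * normSq a) :
    cα ≤ Real.sqrt (α₁ ^ 2 + α₂ ^ 2) / Real.sqrt 5 := by
  by_cases hirr : Irrational (α₁ / α₂)
  · -- irrational case: Hurwitz approximation gives the bound
    apply le_of_forall_pos_le_add
    intro ε hε
    obtain ⟨N, hN⟩ := exists_nat_gt (|α₂| / ε)
    have hα₂N : |α₂| < ε * N := by
      rw [div_lt_iff₀ hε] at hN
      linarith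
    obtain ⟨n, hn, hlt⟩ := hurwitz hirr (N + 2)
    obtain ⟨k, rfl⟩ : ∃ k, n = k + 2 := ⟨n - 2, by omega⟩
    have hQint : (k : ℤ) + 1 ≤ cfQ (α₁ / α₂) (k + 2) := cfQ_large hirr k
    have hQ1int : (1 : ℤ) ≤ cfQ (α₁ / α₂) (k + 2) := by omega
    have hQ1 : (1 : ℝ) ≤ (cfQ (α₁ / α₂) (k + 2) : ℝ) := by exact_mod_cast hQ1int
    have hQN : (N : ℝ) ≤ (cfQ (α₁ / α₂) (k + 2) : ℝ) := by
      have : (N : ℤ) ≤ cfQ (α₁ / α₂) (k + 2) := by omega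
      exact_mod_cast this
    have hEp := cfE_pos hirr (k + 2)
    have habs := cfE_abs hirr (k + 2)
    have hk0 : ((cfQ (α₁ / α₂) (k + 2), -cfP (α₁ / α₂) (k + 2)) : ℤ × ℤ) ≠ 0 := by
      intro hcontra
      rw [Prod.ext_iff] at hcontra
      have h1 := hcontra.1
      simp only [Prod.fst_zero] at h1
      omega
    have hmode := single_mode α₁ α₂ cα h (cfQ (α₁ / α₂) (k + 2)) (-cfP (α₁ / α₂) (k + 2)) hk0
    push_cast at hmode
    exact final_arith α₁ α₂ cα (α₁ / α₂) ε _ _ _ hα₂ rfl hε hQ1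
      (le_trans hα₂N.le (mul_le_mul_of_nonneg_left hQN hε.le)) hEp hlt habs hmode
  · -- rational case: the hypothesis is contradictory
    rw [Irrational] at hirr
    push_neg at hirr
    obtain ⟨q, hq⟩ := hirr
    have hdenpos : 0 < q.den := q.pos
    have hk0 : (((q.den : ℤ), -q.num) : ℤ × ℤ) ≠ 0 := by
      intro hcontra
      rw [Prod.ext_iff] at hcontra
      have h1 := hcontra.1
      simp only [Prod.fst_zero] at h1
      omega
    have hmode := single_mode α₁ α₂ cα h (q.den : ℤ) (-q.num) hk0
    have hzero : α₁ * (((q.den : ℤ) : ℤ) : ℝ) + α₂ * ((-q.num : ℤ) : ℝ) = 0 := by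
      have hqval : (α₁ / α₂) * (q.den : ℝ) = (q.num : ℝ) := by
        rw [← hq, Rat.cast_def]
        field_simp
      have hθα : α₁ = (α₁ / α₂) * α₂ := by field_simp
      push_cast
      push_cast at hqval
      rw [hθα]
      linear_combination α₂ * hqval
    rw [hzero] at hmode
    simp only [abs_zero, mul_zero] at hmode
    exact absurd hmode (not_le.2 hc)
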